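/- Let d ≥ 1, β > d, and let R > 0 and L ≥ 1 be reals. Writing n₁, n₁' for the first coordinates of n, n' ∈ ℤ^d, and letting D₂ be the set of pairs (n, n') ∈ ℤ^d × ℤ^d with |n|_∞ ≥ L, |n'|_∞ ≥ L, |n−n'|_∞ ≤ L/R and max(|n₁|, |n₁'|) ≤ 2L/R, there is a constant C = C(d, β) such that Σ_{(n,n') ∈ D₂} (1+|n−n'|)^{−β} |n|^{−2d−2} |n'|^{−2d−2} |n₁| |n₁'| |n·n'| ≤ C R^{−2} L^{−3d}. -/

import Mathlib

/-- Euclidean norm of a lattice point of `ℤ^d`. -/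
noncomputable def zEucNorm {d : ℕ} (n : Fin d → ℤ) : ℝ :=
  Real.sqrt (∑ i, ((n i : ℝ)) ^ 2)

/-- ℓ∞ norm of a lattice point of `ℤ^d`. -/
noncomputable def zSupNorm {d : ℕ} (n : Fin d → ℤ) : ℝ :=
  ((Finset.univ.sup fun i => (n i).natAbs : ℕ) : ℝ)


open Finset


/-- indicator of `|b| ≤ M` on `ℤ`. -/
noncomputable def chiZ (M : ℕ) : ℤ → ℝ := fun b => if b.natAbs ≤ M then 1 else 0

lemma chiZ_nonneg (M : ℕ) (b : ℤ) : 0 ≤ chiZ M b := by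
  unfold chiZ; split <;> norm_num

lemma chiZ_summable (M : ℕ) : Summable (chiZ M) := by
  apply summable_of_ne_finset_zero (s := Finset.Icc (-(M:ℤ)) M)
  intro b hb
  rw [Finset.mem_Icc] at hb
  unfold chiZ
  rw [if_neg]
  omega

lemma chiZ_tsum (M : ℕ) : ∑' b, chiZ M b = 2*(M:ℝ)+1 := by
  rw [tsum_eq_sum (s := Finset.Icc (-(M:ℤ)) M)]
  · have : ∀ b ∈ Finset.Icc (-(M:ℤ)) M, chiZ M b = 1 := by
      intro b hb; rw [Finset.mem_Icc] at hb; unfold chiZ; rw [if_pos]; omega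
    rw [Finset.sum_congr rfl this, Finset.sum_const, Int.card_Icc]
    have : ((M:ℤ) + 1 - -(M:ℤ)).toNat = 2*M+1 := by omega
    rw [this]
    push_cast; ring
  · intro b hb
    rw [Finset.mem_Icc] at hb; unfold chiZ; rw [if_neg]; omega

/-- products of a summable nonnegative function over `Fin k → ℤ`. -/
lemma summable_pi_prod_fin (g : ℤ → ℝ) (hg0 : ∀ a, 0 ≤ g a) (hg : Summable g) :
    ∀ k : ℕ, Summable (fun n : Fin k → ℤ => ∏ i, g (n i)) ∧
      (∑' n : Fin k → ℤ, ∏ i, g (n i)) = (∑' a, g a) ^ k := by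
  intro k
  induction k with
  | zero =>
      constructor
      · exact Summable.of_finite
      · rw [tsum_fintype]; simp
  | succ k ih =>
      obtain ⟨hs, ht⟩ := ih
      have key : ∀ p : ℤ × (Fin k → ℤ),
          (fun n : Fin (k+1) → ℤ => ∏ i, g (n i)) ((Fin.consEquiv fun _ => ℤ) p)
            = g p.1 * ∏ i, g (p.2 i) := by
        intro p
        simp only [Fin.consEquiv_apply]
        rw [Fin.prod_univ_succ]
        simp only [Fin.cons_zero, Fin.cons_succ]
      have hs2 : Summable (fun p : ℤ × (Fin k → ℤ) => g p.1 * ∏ i, g (p.2 i)) :=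
        Summable.mul_of_nonneg (f := g) (g := fun n : Fin k → ℤ => ∏ i, g (n i)) hg hs
          (fun a => hg0 a) (fun r => Finset.prod_nonneg fun i _ => hg0 _)
      constructor
      · exact ((Fin.consEquiv fun _ => ℤ).summable_iff).mp (hs2.congr fun p => (key p).symm)
      · rw [← Equiv.tsum_eq (Fin.consEquiv fun _ => ℤ)
            (fun n : Fin (k+1) → ℤ => ∏ i, g (n i))]
        calc ∑' p : ℤ × (Fin k → ℤ), (fun n : Fin (k+1) → ℤ => ∏ i, g (n i))
                ((Fin.consEquiv fun _ => ℤ) p)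
            = ∑' p : ℤ × (Fin k → ℤ), g p.1 * ∏ i, g (p.2 i) := tsum_congr key
          _ = ∑' a : ℤ, ∑' r : Fin k → ℤ, g a * ∏ i, g (r i) :=
              Summable.tsum_prod' hs2 (fun a => hs.mul_left (g a))
          _ = ∑' a : ℤ, g a * ∑' r : Fin k → ℤ, ∏ i, g (r i) := by
              exact tsum_congr fun a => tsum_mul_left
          _ = (∑' a, g a) * (∑' a, g a) ^ k := by rw [tsum_mul_right, ht]
          _ = (∑' a, g a) ^ (k+1) := (pow_succ' _ k).symm

/-- products of a summable nonnegative function over `ι → ℤ`, `ι` a fintype. -/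
lemma summable_pi_prod {ι : Type*} [Fintype ι] [DecidableEq ι] (g : ℤ → ℝ)
    (hg0 : ∀ a, 0 ≤ g a) (hg : Summable g) :
    Summable (fun n : ι → ℤ => ∏ i, g (n i)) ∧
      (∑' n : ι → ℤ, ∏ i, g (n i)) = (∑' a, g a) ^ (Fintype.card ι) := by
  obtain ⟨hs, ht⟩ := summable_pi_prod_fin g hg0 hg (Fintype.card ι)
  let e : (Fin (Fintype.card ι) → ℤ) ≃ (ι → ℤ) :=
    Equiv.arrowCongr (Fintype.equivFin ι).symm (Equiv.refl ℤ)
  have key : ∀ r : Fin (Fintype.card ι) → ℤ,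
      (fun n : ι → ℤ => ∏ i, g (n i)) (e r) = ∏ j, g (r j) := by
    intro r
    have h1 : ∀ i : ι, (e r) i = r (Fintype.equivFin ι i) := by
      intro i; simp [e, Equiv.arrowCongr]
    calc ∏ i : ι, g (e r i) = ∏ i : ι, g (r (Fintype.equivFin ι i)) := by
          exact Finset.prod_congr rfl fun i _ => by rw [h1]
      _ = ∏ j, g (r j) := Equiv.prod_comp (Fintype.equivFin ι) (fun j => g (r j))
  constructor
  · exact (e.summable_iff).mp (hs.congr fun r => (key r).symm)
  · rw [← Equiv.tsum_eq e (fun n : ι → ℤ => ∏ i, g (n i)), tsum_congr key, ht]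

/-- tail of `∑ 1/k²` over naturals. -/
lemma tail_sq_nat (L : ℝ) (hL : 1 ≤ L) :
    Summable (fun k : ℕ => if L ≤ (k:ℝ) then ((k:ℝ)^2)⁻¹ else 0) ∧
    (∑' k : ℕ, if L ≤ (k:ℝ) then ((k:ℝ)^2)⁻¹ else 0) ≤ 2 / L := by
  have hmaj : Summable (fun k : ℕ => 1 / (k:ℝ)^2) :=
    Real.summable_one_div_nat_pow.mpr one_lt_two
  have hle : ∀ k : ℕ, (if L ≤ (k:ℝ) then ((k:ℝ)^2)⁻¹ else 0) ≤ 1 / (k:ℝ)^2 := by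
    intro k
    split
    · rw [one_div]
    · positivity
  have h0 : ∀ k : ℕ, 0 ≤ (if L ≤ (k:ℝ) then ((k:ℝ)^2)⁻¹ else 0) := by
    intro k; split <;> positivity
  have hsum : Summable (fun k : ℕ => if L ≤ (k:ℝ) then ((k:ℝ)^2)⁻¹ else 0) :=
    Summable.of_nonneg_of_le h0 hle hmaj
  refine ⟨hsum, Summable.tsum_le_of_sum_le hsum ?_⟩
  intro s
  set K := ⌈L⌉₊ with hK
  have hKL : L ≤ (K:ℝ) := Nat.le_ceil L
  have hK1 : 1 ≤ K := Nat.one_le_ceil_iff.mpr (by linarith)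
  have hK0 : (0:ℝ) < K := by
    have : (1:ℝ) ≤ K := by exact_mod_cast hK1
    linarith
  set N := s.sup id with hN
  set F : ℕ → ℝ := fun k => (k:ℝ)⁻¹ with hF
  have hFanti : ∀ k : ℕ, 1 ≤ k → 0 ≤ F k - F (k+1) := by
    intro k hk
    have hkpos : (0:ℝ) < k := by exact_mod_cast hk
    simp only [hF]
    rw [sub_nonneg]
    apply inv_anti₀ hkpos
    push_cast; linarith
  have step1 : ∀ k ∈ s, (if L ≤ (k:ℝ) then ((k:ℝ)^2)⁻¹ else 0) ≤
      (if k ∈ Finset.Icc K N then 2 * (F k - F (k+1)) else 0) := by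
    intro k hk
    by_cases h : L ≤ (k:ℝ)
    · have hk1 : 1 ≤ k := by
        by_contra hc
        push_neg at hc
        interval_cases k
        simp at h
        linarith
      have hkK : K ≤ k := Nat.ceil_le.mpr h
      have hkN : k ≤ N := Finset.le_sup (f := id) hk
      rw [if_pos h, if_pos (Finset.mem_Icc.mpr ⟨hkK, hkN⟩)]
      set x : ℝ := (k:ℝ) with hx
      have hx1 : (1:ℝ) ≤ x := by rw [hx]; exact_mod_cast hk1
      have hx0 : (0:ℝ) < x := by linarith
      have key : 2 * (F k - F (k+1)) - (x^2)⁻¹ = (x-1) / (x^2*(x+1)) := by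
        simp only [hF]
        push_cast
        field_simp
        ring
      have : 0 ≤ (x-1) / (x^2*(x+1)) := by
        apply div_nonneg (by linarith) (by positivity)
      linarith [key ▸ this]
    · rw [if_neg h]
      split
      · rename_i hmem
        have := hFanti k (le_trans hK1 (Finset.mem_Icc.mp hmem).1)
        linarith
      · exact le_refl 0
  calc ∑ k ∈ s, (if L ≤ (k:ℝ) then ((k:ℝ)^2)⁻¹ else 0)
      ≤ ∑ k ∈ s, (if k ∈ Finset.Icc K N then 2 * (F k - F (k+1)) else 0) :=
        Finset.sum_le_sum step1
    _ ≤ ∑ k ∈ Finset.Icc K N, 2 * (F k - F (k+1)) := by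
        rw [← Finset.sum_filter]
        apply Finset.sum_le_sum_of_subset_of_nonneg
        · intro k hk
          exact (Finset.mem_filter.mp hk).2
        intro k hk _
        have hk1 : 1 ≤ k := le_trans hK1 (Finset.mem_Icc.mp hk).1
        have := hFanti k hk1
        linarith
    _ = 2 * ∑ k ∈ Finset.Icc K N, (F k - F (k+1)) := by rw [Finset.mul_sum]
    _ ≤ 2 / L := by
        rcases le_or_gt K N with hKN | hKN
        · have : ∑ k ∈ Finset.Icc K N, (F k - F (k+1)) = F K - F (K + (N+1-K)) := by
            rw [← Finset.Ico_add_one_right_eq_Icc, Finset.sum_Ico_eq_sum_range]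
            exact Finset.sum_range_sub' (fun i => F (K+i)) (N+1-K)
          rw [this]
          have h1 : (0:ℝ) ≤ F (K + (N+1-K)) := by
            simp only [hF]; positivity
          have h2 : F K ≤ L⁻¹ := by
            simp only [hF]
            exact inv_anti₀ (by linarith) hKL
          rw [div_eq_mul_inv]
          nlinarith
        · rw [Finset.Icc_eq_empty (by omega), Finset.sum_empty, mul_zero]
          positivity

/-- tail of `∑ 1/|a|²` over the integers. -/
lemma tail_sq_int (L : ℝ) (hL : 1 ≤ L) :
    Summable (fun a : ℤ => if L ≤ ((a.natAbs:ℕ):ℝ) then (((a.natAbs:ℕ):ℝ)^2)⁻¹ else 0) ∧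
    (∑' a : ℤ, if L ≤ ((a.natAbs:ℕ):ℝ) then (((a.natAbs:ℕ):ℝ)^2)⁻¹ else 0) ≤ 4 / L := by
  classical
  obtain ⟨hgs, hgt⟩ := tail_sq_nat L hL
  set g : ℕ → ℝ := fun k => if L ≤ (k:ℝ) then ((k:ℝ)^2)⁻¹ else 0 with hg
  have hg0 : ∀ k, 0 ≤ g k := by intro k; simp only [hg]; split <;> positivity
  have h1 : Summable (fun n : ℕ => g ((n:ℤ).natAbs)) := by
    apply hgs.congr; intro n; simp
  have h2 : Summable (fun n : ℕ => g ((-(n:ℤ)).natAbs)) := by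
    apply hgs.congr; intro n; simp
  have hZs : Summable (fun a : ℤ => g a.natAbs) := Summable.of_nat_of_neg (f := fun a : ℤ => g a.natAbs) h1 h2
  refine ⟨hZs, ?_⟩
  have h3 : Summable (fun n : ℕ => g ((-((n:ℤ) + 1)).natAbs)) := by
    apply (hgs.comp_injective (add_left_injective 1)).congr
    intro n
    have : (-((n:ℤ)+1)).natAbs = n + 1 := by omega
    rw [this]
    rfl
  rw [tsum_of_nat_of_neg_add_one (f := fun a : ℤ => g a.natAbs) h1 h3]
  have e1 : ∑' n : ℕ, g ((n:ℤ).natAbs) = ∑' k, g k := tsum_congr (by intro n; simp)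
  have e2 : ∑' n : ℕ, g ((-((n:ℤ)+1)).natAbs) = ∑' n : ℕ, g (n+1) :=
    tsum_congr (by
      intro n
      have h : (-((n:ℤ)+1)).natAbs = n + 1 := by omega
      rw [h])
  have e3 : ∑' n : ℕ, g (n+1) ≤ ∑' k, g k := by
    apply Summable.tsum_le_tsum_of_inj (fun n => n+1) (add_left_injective 1)
      (fun c _ => hg0 c) (fun n => le_refl _)
      (hgs.comp_injective (add_left_injective 1)) hgs
  rw [e1, e2]
  have : 2 / L + 2 / L = 4 / L := by ring
  linarith

/-- the function `(1+|a|)^{-t}` on `ℤ`, summable for `t > 1`. -/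
lemma summable_gZ (t : ℝ) (ht : 1 < t) :
    Summable (fun a : ℤ => (1 + ((a.natAbs:ℕ):ℝ)) ^ (-t)) ∧
    0 < ∑' a : ℤ, (1 + ((a.natAbs:ℕ):ℝ)) ^ (-t) := by
  have hnat : Summable (fun n : ℕ => (1 + (n:ℝ)) ^ (-t)) := by
    have h1 : Summable (fun n : ℕ => ((n:ℝ)) ^ (-t)) :=
      Real.summable_nat_rpow.mpr (by linarith)
    have h2 := (summable_nat_add_iff 1).mpr h1
    apply h2.congr
    intro n
    have : ((n + 1 : ℕ):ℝ) = 1 + (n:ℝ) := by push_cast; ring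
    rw [this]
  have h1 : Summable (fun n : ℕ => (fun a : ℤ => (1 + ((a.natAbs:ℕ):ℝ)) ^ (-t)) (n:ℤ)) := by
    apply hnat.congr; intro n; simp
  have h2 : Summable (fun n : ℕ => (fun a : ℤ => (1 + ((a.natAbs:ℕ):ℝ)) ^ (-t)) (-(n:ℤ))) := by
    apply hnat.congr; intro n; simp
  have hs : Summable (fun a : ℤ => (1 + ((a.natAbs:ℕ):ℝ)) ^ (-t)) :=
    Summable.of_nat_of_neg (f := fun a : ℤ => (1 + ((a.natAbs:ℕ):ℝ)) ^ (-t)) h1 h2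
  refine ⟨hs, ?_⟩
  apply Summable.tsum_pos hs (fun a => Real.rpow_nonneg (by positivity) _) 0
  apply Real.rpow_pos_of_pos
  norm_num

lemma zEucNorm_nonneg {d : ℕ} (n : Fin d → ℤ) : 0 ≤ zEucNorm n := Real.sqrt_nonneg _

lemma zSupNorm_nonneg {d : ℕ} (n : Fin d → ℤ) : 0 ≤ zSupNorm n := Nat.cast_nonneg _

lemma coord_le_zEucNorm {d : ℕ} (n : Fin d → ℤ) (i : Fin d) :
    (((n i).natAbs:ℕ):ℝ) ≤ zEucNorm n := by
  have h1 : (((n i).natAbs:ℕ):ℝ) = |((n i : ℤ):ℝ)| := by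
    rw [Nat.cast_natAbs]; push_cast; ring
  rw [h1, ← Real.sqrt_sq_eq_abs, zEucNorm]
  apply Real.sqrt_le_sqrt
  exact Finset.single_le_sum (f := fun j => ((n j:ℤ):ℝ)^2)
    (fun j _ => by positivity) (Finset.mem_univ i)

lemma exists_sup_index {d : ℕ} (hd : 1 ≤ d) (n : Fin d → ℤ) :
    ∃ i : Fin d, zSupNorm n = (((n i).natAbs:ℕ):ℝ) ∧
      ∀ j, (n j).natAbs ≤ (n i).natAbs := by
  have : Nonempty (Fin d) := ⟨⟨0, by omega⟩⟩
  obtain ⟨i, _, hi⟩ := Finset.exists_mem_eq_sup Finset.univ Finset.univ_nonempty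
    (fun j => (n j).natAbs)
  refine ⟨i, by rw [zSupNorm, hi], fun j => ?_⟩
  rw [← hi]
  exact Finset.le_sup (f := fun j => (n j).natAbs) (Finset.mem_univ j)

lemma zSupNorm_le_zEucNorm {d : ℕ} (hd : 1 ≤ d) (n : Fin d → ℤ) :
    zSupNorm n ≤ zEucNorm n := by
  obtain ⟨i, hi, -⟩ := exists_sup_index hd n
  rw [hi]
  exact coord_le_zEucNorm n i

lemma abs_inner_le_zEucNorm {d : ℕ} (n n' : Fin d → ℤ) :
    |∑ i, ((n i : ℤ):ℝ) * ((n' i : ℤ):ℝ)| ≤ zEucNorm n * zEucNorm n' := by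
  have h := Finset.sum_mul_sq_le_sq_mul_sq Finset.univ
    (fun i => ((n i:ℤ):ℝ)) (fun i => ((n' i:ℤ):ℝ))
  rw [← Real.sqrt_sq_eq_abs, zEucNorm, zEucNorm, ← Real.sqrt_mul (by positivity)]
  exact Real.sqrt_le_sqrt h

/-- the dominating function for the sum over the far variable: supported where
coordinate `i` is at least `L` and realizes the sup norm. -/
noncomputable def uFun (d : ℕ) (L : ℝ) (i : Fin d) (y : Fin d → ℤ) : ℝ :=
  if (L ≤ (((y i).natAbs:ℕ):ℝ) ∧ ∀ j, (y j).natAbs ≤ (y i).natAbs) then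
    ((((y i).natAbs:ℕ):ℝ) ^ (2*d+1))⁻¹ else 0

lemma uFun_nonneg (d : ℕ) (L : ℝ) (i : Fin d) (y : Fin d → ℤ) : 0 ≤ uFun d L i y := by
  unfold uFun; split <;> positivity

/-- the `ℤ`-factor of the split form of `uFun`. -/
noncomputable def vFun (d : ℕ) (L : ℝ) (a : ℤ) : ℝ :=
  if L ≤ ((a.natAbs:ℕ):ℝ) then (((a.natAbs:ℕ):ℝ) ^ (2*d+1))⁻¹ else 0

lemma vFun_nonneg (d : ℕ) (L : ℝ) (a : ℤ) : 0 ≤ vFun d L a := by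
  unfold vFun; split <;> positivity

lemma uFun_summable_tsum (d : ℕ) (hd : 1 ≤ d) (L : ℝ) (hL : 1 ≤ L) (i : Fin d) :
    Summable (uFun d L i) ∧
    ∑' y : Fin d → ℤ, uFun d L i y ≤ 3^(d-1) * (L^d)⁻¹ * (4 / L) := by
  classical
  have hL0 : (0:ℝ) < L := by linarith
  set e := Equiv.piSplitAt i (fun _ : Fin d => ℤ) with he
  set U : ℤ × ({j : Fin d // j ≠ i} → ℤ) → ℝ :=
    fun p => vFun d L p.1 * ∏ j, chiZ p.1.natAbs (p.2 j) with hU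
  have hU0 : ∀ p, 0 ≤ U p := fun p =>
    mul_nonneg (vFun_nonneg _ _ _) (Finset.prod_nonneg fun j _ => chiZ_nonneg _ _)
  have hcard : Fintype.card {j : Fin d // j ≠ i} = d - 1 := by
    simp [Fintype.card_subtype_compl]
  -- step 1 : pointwise domination
  have step1 : ∀ y : Fin d → ℤ, uFun d L i y ≤ U (e y) := by
    intro y
    have hey : e y = (y i, fun j => y j.1) := by
      rw [he]; rfl
    rw [hey]
    by_cases h : (L ≤ (((y i).natAbs:ℕ):ℝ) ∧ ∀ j, (y j).natAbs ≤ (y i).natAbs)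
    · have h1 : uFun d L i y = ((((y i).natAbs:ℕ):ℝ) ^ (2*d+1))⁻¹ := by
        unfold uFun; rw [if_pos h]
      have h2 : vFun d L (y i) = ((((y i).natAbs:ℕ):ℝ) ^ (2*d+1))⁻¹ := by
        unfold vFun; rw [if_pos h.1]
      have h3 : ∀ j : {j : Fin d // j ≠ i}, chiZ (y i).natAbs (y j.1) = 1 := by
        intro j; unfold chiZ; rw [if_pos (h.2 j.1)]
      simp only [hU, h2]
      rw [Finset.prod_congr rfl (fun j _ => h3 j), Finset.prod_const_one, mul_one, h1]
    · have h1 : uFun d L i y = 0 := by unfold uFun; rw [if_neg h]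
      rw [h1]
      exact hU0 _
  -- step 2 : summability and sum of U
  set Φ : ℤ → ℝ := fun a => vFun d L a * (2*((a.natAbs:ℕ):ℝ)+1)^(d-1) with hΦ
  have hrest : ∀ a : ℤ,
      Summable (fun r : {j : Fin d // j ≠ i} → ℤ => ∏ j, chiZ a.natAbs (r j)) ∧
      (∑' r : {j : Fin d // j ≠ i} → ℤ, ∏ j, chiZ a.natAbs (r j))
        = (2*((a.natAbs:ℕ):ℝ)+1) ^ (d-1) := by
    intro a
    obtain ⟨hs, ht⟩ := summable_pi_prod (ι := {j : Fin d // j ≠ i}) (chiZ a.natAbs)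
      (chiZ_nonneg _) (chiZ_summable _)
    exact ⟨hs, by rw [ht, chiZ_tsum, hcard]⟩
  have hUinner : ∀ a : ℤ, Summable (fun r : {j : Fin d // j ≠ i} → ℤ => U (a, r)) := by
    intro a
    exact ((hrest a).1.mul_left (vFun d L a))
  have hUcol : ∀ a : ℤ, (∑' r : {j : Fin d // j ≠ i} → ℤ, U (a, r)) = Φ a := by
    intro a
    simp only [hU, hΦ]
    rw [tsum_mul_left, (hrest a).2]
  -- the comparison function for Φ
  set T : ℤ → ℝ := fun a => if L ≤ ((a.natAbs:ℕ):ℝ) then (((a.natAbs:ℕ):ℝ)^2)⁻¹ else 0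
    with hT
  obtain ⟨hTs, hTt⟩ := tail_sq_int L hL
  have hΦle : ∀ a : ℤ, Φ a ≤ 3^(d-1) * (L^d)⁻¹ * T a := by
    intro a
    simp only [hΦ, hT]
    by_cases h : L ≤ ((a.natAbs:ℕ):ℝ)
    · rw [if_pos h]
      have h2 : vFun d L a = (((a.natAbs:ℕ):ℝ) ^ (2*d+1))⁻¹ := by
        unfold vFun; rw [if_pos h]
      rw [h2]
      set x : ℝ := ((a.natAbs:ℕ):ℝ) with hx
      have hx1 : (1:ℝ) ≤ x := by linarith
      have hx0 : (0:ℝ) < x := by linarith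
      have hb1 : (2*x+1)^(d-1) ≤ (3*x)^(d-1) :=
        pow_le_pow_left₀ (by linarith) (by linarith) _
      have hkey : (x ^ (2*d+1))⁻¹ * (3*x)^(d-1) = 3^(d-1) * (x^(d+2))⁻¹ := by
        rw [mul_pow]
        have hsplit : x ^ (2*d+1) = x^(d+2) * x^(d-1) := by
          rw [← pow_add]
          congr 1
          omega
        rw [hsplit]
        field_simp
      have hb2 : (x^(d+2))⁻¹ ≤ (L^d)⁻¹ * (x^2)⁻¹ := by
        have h1 : x^(d+2) = x^d * x^2 := by rw [← pow_add]
        rw [h1, mul_inv]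
        apply mul_le_mul_of_nonneg_right _ (by positivity)
        apply inv_anti₀ (by positivity) (pow_le_pow_left₀ hL0.le (by linarith) d)
      calc (x ^ (2*d+1))⁻¹ * (2*x+1)^(d-1)
          ≤ (x ^ (2*d+1))⁻¹ * (3*x)^(d-1) := by
            apply mul_le_mul_of_nonneg_left hb1 (by positivity)
        _ = 3^(d-1) * (x^(d+2))⁻¹ := hkey
        _ ≤ 3^(d-1) * ((L^d)⁻¹ * (x^2)⁻¹) := by
            apply mul_le_mul_of_nonneg_left hb2 (by positivity)
        _ = 3^(d-1) * (L^d)⁻¹ * (x^2)⁻¹ := by ring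
    · rw [if_neg h]
      have h2 : vFun d L a = 0 := by unfold vFun; rw [if_neg h]
      rw [h2, zero_mul, mul_zero]
  have hΦ0 : ∀ a, 0 ≤ Φ a := fun a => mul_nonneg (vFun_nonneg _ _ _) (by positivity)
  have hcT : Summable (fun a : ℤ => 3^(d-1) * (L^d)⁻¹ * T a) := hTs.mul_left _
  have hΦs : Summable Φ := Summable.of_nonneg_of_le hΦ0 hΦle hcT
  have hUs : Summable U := by
    apply (summable_prod_of_nonneg hU0).mpr
    exact ⟨hUinner, by
      apply hΦs.congr
      intro a
      exact (hUcol a).symm⟩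
  have hUt : ∑' p, U p ≤ 3^(d-1) * (L^d)⁻¹ * (4 / L) := by
    rw [Summable.tsum_prod' hUs hUinner]
    calc (∑' a : ℤ, ∑' r, U (a, r)) = ∑' a : ℤ, Φ a := tsum_congr hUcol
      _ ≤ ∑' a : ℤ, 3^(d-1) * (L^d)⁻¹ * T a := Summable.tsum_le_tsum hΦle hΦs hcT
      _ = 3^(d-1) * (L^d)⁻¹ * ∑' a, T a := tsum_mul_left
      _ ≤ 3^(d-1) * (L^d)⁻¹ * (4 / L) := by
          apply mul_le_mul_of_nonneg_left hTt (by positivity)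
  -- transfer back through the equivalence
  have hUes : Summable (fun y => U (e y)) := hUs.comp_injective e.injective
  have hus : Summable (uFun d L i) :=
    Summable.of_nonneg_of_le (uFun_nonneg d L i) step1 hUes
  refine ⟨hus, ?_⟩
  calc ∑' y, uFun d L i y ≤ ∑' y, U (e y) := Summable.tsum_le_tsum step1 hus hUes
    _ = ∑' p, U p := e.tsum_eq U
    _ ≤ 3^(d-1) * (L^d)⁻¹ * (4 / L) := hUt

lemma pointwise_bound {d : ℕ} (hd : 1 ≤ d) {β t : ℝ} (hβ : (d:ℝ) < β) (ht : t = β / (d:ℝ))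
    {R L : ℝ} (hR : 0 < R) (hL : 1 ≤ L) (i0 : Fin d) (n n' : Fin d → ℤ)
    (h1 : L ≤ zSupNorm n) (h2 : L ≤ zSupNorm n')
    (h4 : max |((n i0 : ℤ):ℝ)| |((n' i0 : ℤ):ℝ)| ≤ 2*L/R) :
    (1 + zEucNorm (n - n')) ^ (-β) *
      zEucNorm n ^ (-(2*(d:ℝ)) - 2) * zEucNorm n' ^ (-(2*(d:ℝ)) - 2) *
      |((n i0 : ℤ):ℝ)| * |((n' i0 : ℤ):ℝ)| *
      |∑ i, ((n i : ℤ):ℝ) * ((n' i : ℤ):ℝ)| ≤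
    ((2*L/R)^2 * (L^(2*d+1))⁻¹) *
      ((∏ i, (1 + ((((n - n') i).natAbs:ℕ):ℝ)) ^ (-t)) * (∑ i, uFun d L i n')) := by
  have hL0 : (0:ℝ) < L := by linarith
  have hd1 : (1:ℝ) ≤ (d:ℝ) := by exact_mod_cast hd
  have hd0 : (0:ℝ) < (d:ℝ) := by linarith
  have htpos : 0 < t := by
    rw [ht]
    apply div_pos (by linarith) hd0
  set m := n - n' with hm
  have hEn : L ≤ zEucNorm n := le_trans h1 (zSupNorm_le_zEucNorm hd n)
  have hEn' : L ≤ zEucNorm n' := le_trans h2 (zSupNorm_le_zEucNorm hd n')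
  have hEn0 : 0 < zEucNorm n := lt_of_lt_of_le hL0 hEn
  have hEn'0 : 0 < zEucNorm n' := lt_of_lt_of_le hL0 hEn'
  have hSm0 : 0 ≤ zSupNorm m := zSupNorm_nonneg m
  have h0m : (0:ℝ) < 1 + zSupNorm m := by linarith
  -- A1 : the β-factor
  have hA1 : (1 + zEucNorm m) ^ (-β) ≤ ∏ i, (1 + (((m i).natAbs:ℕ):ℝ)) ^ (-t) := by
    have hSE : zSupNorm m ≤ zEucNorm m := zSupNorm_le_zEucNorm hd m
    have step1 : (1 + zEucNorm m) ^ (-β) ≤ (1 + zSupNorm m) ^ (-β) :=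
      Real.rpow_le_rpow_of_nonpos h0m (by linarith) (by linarith)
    have hfac : ∀ i : Fin d, (1 + (((m i).natAbs:ℕ):ℝ))^t ≤ (1 + zSupNorm m)^t := by
      intro i
      apply Real.rpow_le_rpow (by positivity) _ htpos.le
      have : ((m i).natAbs:ℕ) ≤ (Finset.univ.sup fun j => (m j).natAbs : ℕ) :=
        Finset.le_sup (f := fun j => (m j).natAbs) (Finset.mem_univ i)
      have hcast : (((m i).natAbs:ℕ):ℝ) ≤ zSupNorm m := by
        rw [zSupNorm]; exact_mod_cast this
      linarith
    have hp : ∏ i, (1 + (((m i).natAbs:ℕ):ℝ))^t ≤ (1 + zSupNorm m)^β := by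
      calc ∏ i, (1 + (((m i).natAbs:ℕ):ℝ))^t
          ≤ ∏ _i : Fin d, (1 + zSupNorm m)^t :=
            Finset.prod_le_prod (fun i _ => Real.rpow_nonneg (by positivity) t)
              (fun i _ => hfac i)
        _ = ((1 + zSupNorm m)^t)^(d:ℕ) := by
            rw [Finset.prod_const, Finset.card_univ, Fintype.card_fin]
        _ = (1 + zSupNorm m)^(t*(d:ℝ)) := by
            rw [← Real.rpow_natCast ((1 + zSupNorm m)^t) d, ← Real.rpow_mul h0m.le]
        _ = (1 + zSupNorm m)^β := by
            rw [ht, div_mul_cancel₀ β (ne_of_gt hd0)]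
    have hinv1 : (1 + zSupNorm m) ^ (-β) = ((1 + zSupNorm m)^β)⁻¹ := by
      rw [Real.rpow_neg h0m.le]
    have hinv2 : ∏ i, (1 + (((m i).natAbs:ℕ):ℝ)) ^ (-t)
        = (∏ i, (1 + (((m i).natAbs:ℕ):ℝ))^t)⁻¹ := by
      rw [← Finset.prod_inv_distrib]
      exact Finset.prod_congr rfl fun i _ => Real.rpow_neg (by positivity) t
    have hppos : 0 < ∏ i, (1 + (((m i).natAbs:ℕ):ℝ))^t :=
      Finset.prod_pos fun i _ => Real.rpow_pos_of_pos (by positivity) t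
    calc (1 + zEucNorm m) ^ (-β) ≤ (1 + zSupNorm m) ^ (-β) := step1
      _ = ((1 + zSupNorm m)^β)⁻¹ := hinv1
      _ ≤ (∏ i, (1 + (((m i).natAbs:ℕ):ℝ))^t)⁻¹ := inv_anti₀ hppos hp
      _ = ∏ i, (1 + (((m i).natAbs:ℕ):ℝ)) ^ (-t) := hinv2.symm
  -- rewrite the rpow factors as inverse powers
  have hexp : (-(2*(d:ℝ)) - 2) = -(((2*d+2 : ℕ)):ℝ) := by push_cast; ring
  have hbEq : zEucNorm n ^ (-(2*(d:ℝ)) - 2) = ((zEucNorm n)^(2*d+2))⁻¹ := by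
    rw [hexp, Real.rpow_neg (zEucNorm_nonneg n), Real.rpow_natCast]
  have hcEq : zEucNorm n' ^ (-(2*(d:ℝ)) - 2) = ((zEucNorm n')^(2*d+2))⁻¹ := by
    rw [hexp, Real.rpow_neg (zEucNorm_nonneg n'), Real.rpow_natCast]
  -- A2 : Cauchy-Schwarz and norm lower bounds
  have hA2 : ((zEucNorm n)^(2*d+2))⁻¹ * ((zEucNorm n')^(2*d+2))⁻¹ *
      |∑ i, ((n i : ℤ):ℝ) * ((n' i : ℤ):ℝ)| ≤
      (L^(2*d+1))⁻¹ * (∑ i, uFun d L i n') := by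
    have hCS := abs_inner_le_zEucNorm n n'
    have hstep : ((zEucNorm n)^(2*d+2))⁻¹ * ((zEucNorm n')^(2*d+2))⁻¹ *
        |∑ i, ((n i : ℤ):ℝ) * ((n' i : ℤ):ℝ)| ≤
        ((zEucNorm n)^(2*d+1))⁻¹ * ((zEucNorm n')^(2*d+1))⁻¹ := by
      have heq : ((zEucNorm n)^(2*d+2))⁻¹ * ((zEucNorm n')^(2*d+2))⁻¹ *
          (zEucNorm n * zEucNorm n') =
          ((zEucNorm n)^(2*d+1))⁻¹ * ((zEucNorm n')^(2*d+1))⁻¹ := by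
        rw [pow_succ (zEucNorm n) (2*d+1), pow_succ (zEucNorm n') (2*d+1)]
        field_simp
      calc ((zEucNorm n)^(2*d+2))⁻¹ * ((zEucNorm n')^(2*d+2))⁻¹ *
            |∑ i, ((n i : ℤ):ℝ) * ((n' i : ℤ):ℝ)|
          ≤ ((zEucNorm n)^(2*d+2))⁻¹ * ((zEucNorm n')^(2*d+2))⁻¹ *
            (zEucNorm n * zEucNorm n') := by
            apply mul_le_mul_of_nonneg_left hCS
            positivity
        _ = ((zEucNorm n)^(2*d+1))⁻¹ * ((zEucNorm n')^(2*d+1))⁻¹ := heq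
    have hb1 : ((zEucNorm n)^(2*d+1))⁻¹ ≤ (L^(2*d+1))⁻¹ :=
      inv_anti₀ (by positivity) (pow_le_pow_left₀ hL0.le hEn _)
    have hb2 : ((zEucNorm n')^(2*d+1))⁻¹ ≤ ∑ i, uFun d L i n' := by
      obtain ⟨i, hi, hmax⟩ := exists_sup_index hd n'
      have hLi : L ≤ (((n' i).natAbs:ℕ):ℝ) := by rw [← hi]; exact h2
      have hu : uFun d L i n' = ((((n' i).natAbs:ℕ):ℝ) ^ (2*d+1))⁻¹ := by
        unfold uFun; rw [if_pos ⟨hLi, hmax⟩]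
      have hle1 : ((zEucNorm n')^(2*d+1))⁻¹ ≤ (((((n' i).natAbs:ℕ):ℝ))^(2*d+1))⁻¹ := by
        apply inv_anti₀ (pow_pos (lt_of_lt_of_le hL0 hLi) _)
        apply pow_le_pow_left₀ (by positivity)
        rw [← hi]
        exact zSupNorm_le_zEucNorm hd n'
      calc ((zEucNorm n')^(2*d+1))⁻¹ ≤ ((((n' i).natAbs:ℕ):ℝ) ^ (2*d+1))⁻¹ := hle1
        _ = uFun d L i n' := hu.symm
        _ ≤ ∑ j, uFun d L j n' :=
            Finset.single_le_sum (f := fun j => uFun d L j n')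
              (fun j _ => uFun_nonneg d L j n') (Finset.mem_univ i)
    calc ((zEucNorm n)^(2*d+2))⁻¹ * ((zEucNorm n')^(2*d+2))⁻¹ *
          |∑ i, ((n i : ℤ):ℝ) * ((n' i : ℤ):ℝ)|
        ≤ ((zEucNorm n)^(2*d+1))⁻¹ * ((zEucNorm n')^(2*d+1))⁻¹ := hstep
      _ ≤ (L^(2*d+1))⁻¹ * (∑ i, uFun d L i n') := by
          apply mul_le_mul hb1 hb2 (by positivity) (by positivity)
  -- A3 : the first-coordinate factors
  have hx : |((n i0 : ℤ):ℝ)| ≤ 2*L/R := le_trans (le_max_left _ _) h4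
  have hx' : |((n' i0 : ℤ):ℝ)| ≤ 2*L/R := le_trans (le_max_right _ _) h4
  have hA3 : |((n i0 : ℤ):ℝ)| * |((n' i0 : ℤ):ℝ)| ≤ (2*L/R)^2 := by
    rw [sq]
    exact mul_le_mul hx hx' (abs_nonneg _) (le_trans (abs_nonneg _) hx)
  -- combine
  have hre : (1 + zEucNorm m) ^ (-β) *
      zEucNorm n ^ (-(2*(d:ℝ)) - 2) * zEucNorm n' ^ (-(2*(d:ℝ)) - 2) *
      |((n i0 : ℤ):ℝ)| * |((n' i0 : ℤ):ℝ)| *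
      |∑ i, ((n i : ℤ):ℝ) * ((n' i : ℤ):ℝ)| =
      (1 + zEucNorm m) ^ (-β) *
      ((((zEucNorm n)^(2*d+2))⁻¹ * ((zEucNorm n')^(2*d+2))⁻¹ *
        |∑ i, ((n i : ℤ):ℝ) * ((n' i : ℤ):ℝ)|) *
       (|((n i0 : ℤ):ℝ)| * |((n' i0 : ℤ):ℝ)|)) := by
    rw [hbEq, hcEq]; ring
  have hre2 : ((2*L/R)^2 * (L^(2*d+1))⁻¹) *
      ((∏ i, (1 + (((m i).natAbs:ℕ):ℝ)) ^ (-t)) * (∑ i, uFun d L i n')) =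
      (∏ i, (1 + (((m i).natAbs:ℕ):ℝ)) ^ (-t)) *
      (((L^(2*d+1))⁻¹ * (∑ i, uFun d L i n')) * (2*L/R)^2) := by ring
  rw [hre, hre2]
  apply mul_le_mul hA1
  · apply mul_le_mul hA2 hA3 (by positivity) _
    apply mul_nonneg (by positivity)
    exact Finset.sum_nonneg fun i _ => uFun_nonneg d L i n'
  · apply mul_nonneg (mul_nonneg _ _) (by positivity)
    · positivity
    · positivity
  · exact Finset.prod_nonneg fun i _ => Real.rpow_nonneg (by positivity) _

/-- diagonal regime perpendicular to `e₁`. Over the set `D₂` of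
pairs with `|n|_∞, |n'|_∞ ≥ L`, `|n-n'|_∞ ≤ L/R` and
`max(|n₁|, |n₁'|) ≤ 2L/R`, one has
`Σ (1+|n-n'|)^{-β} |n|^{-2d-2} |n'|^{-2d-2} |n₁||n₁'||n·n'| ≤ C R^{-2} L^{-3d}`,
with `C = C(d, β)`. -/
theorem perpendicular_diagonal_regime_estimate (d : ℕ) (hd : 1 ≤ d) (β : ℝ)
    (hβ : (d : ℝ) < β) :
    ∃ C : ℝ, 0 < C ∧ ∀ R L : ℝ, 0 < R → 1 ≤ L →
      Summable (fun p : {p : (Fin d → ℤ) × (Fin d → ℤ) //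
          L ≤ zSupNorm p.1 ∧ L ≤ zSupNorm p.2 ∧ zSupNorm (p.1 - p.2) ≤ L / R ∧
          max |((p.1 ⟨0, by omega⟩ : ℤ) : ℝ)| |((p.2 ⟨0, by omega⟩ : ℤ) : ℝ)| ≤
            2 * L / R} =>
        (1 + zEucNorm (p.1.1 - p.1.2)) ^ (-β) *
          zEucNorm p.1.1 ^ (-(2 * (d : ℝ)) - 2) *
          zEucNorm p.1.2 ^ (-(2 * (d : ℝ)) - 2) *
          |((p.1.1 ⟨0, by omega⟩ : ℤ) : ℝ)| * |((p.1.2 ⟨0, by omega⟩ : ℤ) : ℝ)| *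
          |∑ i, ((p.1.1 i : ℝ) * (p.1.2 i : ℝ))|) ∧
      (∑' p : {p : (Fin d → ℤ) × (Fin d → ℤ) //
          L ≤ zSupNorm p.1 ∧ L ≤ zSupNorm p.2 ∧ zSupNorm (p.1 - p.2) ≤ L / R ∧
          max |((p.1 ⟨0, by omega⟩ : ℤ) : ℝ)| |((p.2 ⟨0, by omega⟩ : ℤ) : ℝ)| ≤
            2 * L / R},
        (1 + zEucNorm (p.1.1 - p.1.2)) ^ (-β) *
          zEucNorm p.1.1 ^ (-(2 * (d : ℝ)) - 2) *
          zEucNorm p.1.2 ^ (-(2 * (d : ℝ)) - 2) *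
          |((p.1.1 ⟨0, by omega⟩ : ℤ) : ℝ)| * |((p.1.2 ⟨0, by omega⟩ : ℤ) : ℝ)| *
          |∑ i, ((p.1.1 i : ℝ) * (p.1.2 i : ℝ))|) ≤
        C * R ^ (-2 : ℤ) * L ^ (-(3 * (d : ℝ))) := by
  have hd1 : (1:ℝ) ≤ (d:ℝ) := by exact_mod_cast hd
  have hd0 : (0:ℝ) < (d:ℝ) := by linarith
  set t : ℝ := β / (d:ℝ) with ht
  have ht1 : 1 < t := by
    rw [ht, lt_div_iff₀ hd0]
    linarith
  obtain ⟨hgZs, hCt⟩ := summable_gZ t ht1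
  set Ct : ℝ := ∑' a : ℤ, (1 + ((a.natAbs:ℕ):ℝ)) ^ (-t) with hCtdef
  refine ⟨16 * (d:ℝ) * 3^(d-1) * Ct^d, ?_, ?_⟩
  · apply mul_pos (mul_pos (mul_pos (by norm_num) hd0) (by positivity)) (pow_pos hCt d)
  intro R L hR hL
  have hL0 : (0:ℝ) < L := by linarith
  -- majorant pieces
  set H : (Fin d → ℤ) → ℝ := fun m => ∏ i, (1 + (((m i).natAbs:ℕ):ℝ)) ^ (-t) with hH
  set W : (Fin d → ℤ) → ℝ := fun y => ∑ i, uFun d L i y with hW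
  set c0 : ℝ := (2*L/R)^2 * (L^(2*d+1))⁻¹ with hc0
  set F : ((Fin d → ℤ) × (Fin d → ℤ)) → ℝ := fun q => c0 * (H (q.1 - q.2) * W q.2) with hF
  have hH0 : ∀ m, 0 ≤ H m := fun m =>
    Finset.prod_nonneg fun i _ => Real.rpow_nonneg (by positivity) _
  have hW0 : ∀ y, 0 ≤ W y := fun y =>
    Finset.sum_nonneg fun i _ => uFun_nonneg d L i y
  have hc00 : 0 ≤ c0 := by rw [hc0]; positivity
  have hF0 : ∀ q, 0 ≤ F q := fun q => mul_nonneg hc00 (mul_nonneg (hH0 _) (hW0 _))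
  obtain ⟨hHs, hHt⟩ := summable_pi_prod_fin (fun a : ℤ => (1 + ((a.natAbs:ℕ):ℝ)) ^ (-t))
    (fun a => Real.rpow_nonneg (by positivity) _) hgZs d
  have hWs : Summable W := summable_sum fun i _ => (uFun_summable_tsum d hd L hL i).1
  have hWt : ∑' y, W y ≤ (d:ℝ) * (3^(d-1) * (L^d)⁻¹ * (4 / L)) := by
    calc ∑' y, W y = ∑ i, ∑' y, uFun d L i y :=
          Summable.tsum_finsetSum fun i _ => (uFun_summable_tsum d hd L hL i).1
      _ ≤ ∑ _i : Fin d, (3^(d-1) * (L^d)⁻¹ * (4 / L)) :=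
          Finset.sum_le_sum fun i _ => (uFun_summable_tsum d hd L hL i).2
      _ = (d:ℝ) * (3^(d-1) * (L^d)⁻¹ * (4 / L)) := by
          rw [Finset.sum_const, Finset.card_univ, Fintype.card_fin, nsmul_eq_mul]
  -- the shear equivalence
  set e : ((Fin d → ℤ) × (Fin d → ℤ)) ≃ ((Fin d → ℤ) × (Fin d → ℤ)) :=
    { toFun := fun q => (q.1 + q.2, q.2)
      invFun := fun q => (q.1 - q.2, q.2)
      left_inv := fun q => by simp
      right_inv := fun q => by simp } with he
  have hFe : ∀ q : ((Fin d → ℤ) × (Fin d → ℤ)), F (e q) = c0 * (H q.1 * W q.2) := by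
    intro q
    show c0 * (H (q.1 + q.2 - q.2) * W q.2) = c0 * (H q.1 * W q.2)
    rw [add_sub_cancel_right]
  have hGs : Summable (fun q : ((Fin d → ℤ) × (Fin d → ℤ)) => H q.1 * W q.2) :=
    Summable.mul_of_nonneg (f := H) (g := W) hHs hWs hH0 hW0
  have hGcs : Summable (fun q : ((Fin d → ℤ) × (Fin d → ℤ)) => c0 * (H q.1 * W q.2)) :=
    hGs.mul_left c0
  have hFes : Summable (fun q => F (e q)) := hGcs.congr fun q => (hFe q).symm
  have hFs : Summable F := (e.summable_iff (f := F)).mp hFes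
  have hsplit : ∑' q : ((Fin d → ℤ) × (Fin d → ℤ)), H q.1 * W q.2
      = (∑' m, H m) * (∑' y, W y) := by
    rw [Summable.tsum_prod' hGs fun b => hWs.mul_left (H b)]
    calc ∑' m, ∑' y, H m * W y = ∑' m, H m * ∑' y, W y :=
          tsum_congr fun m => tsum_mul_left
      _ = (∑' m, H m) * (∑' y, W y) := tsum_mul_right
  have hFt : ∑' q, F q ≤ c0 * (Ct^d * ((d:ℝ) * (3^(d-1) * (L^d)⁻¹ * (4 / L)))) := by
    have h1 : ∑' q, F q = c0 * ((∑' m, H m) * (∑' y, W y)) := by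
      rw [← e.tsum_eq F, tsum_congr hFe, tsum_mul_left, hsplit]
    rw [h1, hHt]
    apply mul_le_mul_of_nonneg_left _ hc00
    apply mul_le_mul_of_nonneg_left hWt (by positivity)
  -- pointwise domination on the constrained set
  have hpoint : ∀ p : {p : (Fin d → ℤ) × (Fin d → ℤ) //
      L ≤ zSupNorm p.1 ∧ L ≤ zSupNorm p.2 ∧ zSupNorm (p.1 - p.2) ≤ L / R ∧
      max |((p.1 ⟨0, by omega⟩ : ℤ) : ℝ)| |((p.2 ⟨0, by omega⟩ : ℤ) : ℝ)| ≤
        2 * L / R},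
      (1 + zEucNorm (p.1.1 - p.1.2)) ^ (-β) *
          zEucNorm p.1.1 ^ (-(2 * (d : ℝ)) - 2) *
          zEucNorm p.1.2 ^ (-(2 * (d : ℝ)) - 2) *
          |((p.1.1 ⟨0, by omega⟩ : ℤ) : ℝ)| * |((p.1.2 ⟨0, by omega⟩ : ℤ) : ℝ)| *
          |∑ i, ((p.1.1 i : ℝ) * (p.1.2 i : ℝ))| ≤ F p.1 := by
    rintro ⟨⟨n, n'⟩, hn, hn', -, h4⟩
    have := pointwise_bound hd hβ ht hR hL (⟨0, by omega⟩ : Fin d) n n' hn hn'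
      (by convert h4 using 2 <;> norm_num)
    exact this
  have hf0 : ∀ p : {p : (Fin d → ℤ) × (Fin d → ℤ) //
      L ≤ zSupNorm p.1 ∧ L ≤ zSupNorm p.2 ∧ zSupNorm (p.1 - p.2) ≤ L / R ∧
      max |((p.1 ⟨0, by omega⟩ : ℤ) : ℝ)| |((p.2 ⟨0, by omega⟩ : ℤ) : ℝ)| ≤
        2 * L / R},
      0 ≤ (1 + zEucNorm (p.1.1 - p.1.2)) ^ (-β) *
          zEucNorm p.1.1 ^ (-(2 * (d : ℝ)) - 2) *
          zEucNorm p.1.2 ^ (-(2 * (d : ℝ)) - 2) *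
          |((p.1.1 ⟨0, by omega⟩ : ℤ) : ℝ)| * |((p.1.2 ⟨0, by omega⟩ : ℤ) : ℝ)| *
          |∑ i, ((p.1.1 i : ℝ) * (p.1.2 i : ℝ))| := by
    intro p
    have h1 : (0:ℝ) ≤ 1 + zEucNorm (p.1.1 - p.1.2) := by
      have := zEucNorm_nonneg (p.1.1 - p.1.2); linarith
    exact mul_nonneg (mul_nonneg (mul_nonneg (mul_nonneg (mul_nonneg
      (Real.rpow_nonneg h1 _) (Real.rpow_nonneg (zEucNorm_nonneg _) _))
      (Real.rpow_nonneg (zEucNorm_nonneg _) _)) (abs_nonneg _)) (abs_nonneg _))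
      (abs_nonneg _)
  have hFsub : Summable (fun p : {p : (Fin d → ℤ) × (Fin d → ℤ) //
      L ≤ zSupNorm p.1 ∧ L ≤ zSupNorm p.2 ∧ zSupNorm (p.1 - p.2) ≤ L / R ∧
      max |((p.1 ⟨0, by omega⟩ : ℤ) : ℝ)| |((p.2 ⟨0, by omega⟩ : ℤ) : ℝ)| ≤
        2 * L / R} => F p.1) := hFs.comp_injective Subtype.val_injective
  have hfs := Summable.of_nonneg_of_le hf0 hpoint hFsub
  refine ⟨hfs, ?_⟩
  have hmain := Summable.tsum_le_tsum_of_inj (Subtype.val) Subtype.val_injective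
    (fun c _ => hF0 c) hpoint hfs hFs
  -- final arithmetic
  have hRz : R ^ (-2:ℤ) = (R^2)⁻¹ := by
    rw [zpow_neg]
    norm_cast
  have hLz : L ^ (-(3*(d:ℝ))) = (L^(3*d))⁻¹ := by
    have hcast : -(3*(d:ℝ)) = -(((3*d:ℕ)):ℝ) := by push_cast; ring
    rw [hcast, Real.rpow_neg hL0.le, Real.rpow_natCast]
  rw [hRz, hLz]
  have hfin : c0 * (Ct^d * ((d:ℝ) * (3^(d-1) * (L^d)⁻¹ * (4 / L))))
      = 16 * (d:ℝ) * 3^(d-1) * Ct^d * (R^2)⁻¹ * (L^(3*d))⁻¹ := by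
    rw [hc0]
    field_simp
    ring
  calc (∑' p, _) ≤ ∑' q, F q := hmain
    _ ≤ c0 * (Ct^d * ((d:ℝ) * (3^(d-1) * (L^d)⁻¹ * (4 / L)))) := hFt
    _ = 16 * (d:ℝ) * 3^(d-1) * Ct^d * (R^2)⁻¹ * (L^(3*d))⁻¹ := hfin
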